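/- arXiv:2504.05713 — 6 statements merged into one kernel-verified Lean document; each statement's English description precedes it below -/
import Mathlib

section
/- Let Q : (0,1) → ℝ be a positive, continuous, strictly increasing quantile function with ∫₀ᵘ Q(p) dp finite for all u ∈ (0,1). Define the poverty gap ratio A₁(u) = u - (1/Q(u)) ∫₀ᵘ Q(p) dp. Then Q is uniquely recovered from A₁ via Q(u) = exp(-∫ᵤ¹ (p - A₁(p))⁻¹ dp) / (u - A₁(u)), provided the integral ∫ᵤ¹ (p - A₁(p))⁻¹ dp converges and the normalization ∫₀¹ Q(p) dp = 1 holds. -/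
open MeasureTheory Set

/-- the poverty gap ratio determines the quantile function via the
inversion formula. -/
theorem pgr_inversion
    (Q A₁ : ℝ → ℝ)
    (hpos : ∀ u ∈ Ioo (0:ℝ) 1, 0 < Q u)
    (hcont : ContinuousOn Q (Ioo (0:ℝ) 1))
    (hmono : StrictMonoOn Q (Ioo (0:ℝ) 1))
    (hint : ∀ u ∈ Ioo (0:ℝ) 1, IntervalIntegrable Q volume 0 u)
    (hA₁ : ∀ u ∈ Ioo (0:ℝ) 1,
      A₁ u = u - (1 / Q u) * ∫ p in (0:ℝ)..u, Q p)
    (hconv : ∀ u ∈ Ioo (0:ℝ) 1,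
      IntervalIntegrable (fun p => (p - A₁ p)⁻¹) volume u 1)
    (hnorm : (∫ p in (0:ℝ)..1, Q p) = 1) :
    ∀ u ∈ Ioo (0:ℝ) 1,
      Q u = Real.exp (-∫ p in u..1, (p - A₁ p)⁻¹) / (u - A₁ u) := by
  intro u hu
  obtain ⟨hu0, hu1⟩ := hu
  set G : ℝ → ℝ := fun p => ∫ x in (0:ℝ)..p, Q x with hG
  -- Q is interval integrable on [0,1]
  have hQint1 : IntervalIntegrable Q volume 0 1 := by
    by_contra h
    rw [intervalIntegral.integral_undef h] at hnorm
    norm_num at hnorm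
  -- G is continuous on [0,1]
  have hGcont : ContinuousOn G (Icc 0 1) := by
    have hIoc : IntegrableOn Q (Ioc 0 1) volume :=
      (intervalIntegrable_iff_integrableOn_Ioc_of_le (by norm_num)).mp hQint1
    have hIcc : IntegrableOn Q (Icc (0:ℝ) 1) volume :=
      (integrableOn_Icc_iff_integrableOn_Ioc (μ := volume)).mpr hIoc
    have := intervalIntegral.continuousOn_primitive_interval
      (f := Q) (a := (0:ℝ)) (b := 1)
      (by rwa [Set.uIcc_of_le (by norm_num : (0:ℝ) ≤ 1)])
    simpa [Set.uIcc_of_le (by norm_num : (0:ℝ) ≤ 1)] using this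
  -- G is positive on (0,1)
  have hGpos : ∀ p ∈ Ioo (0:ℝ) 1, 0 < G p := by
    intro p hp
    obtain ⟨hp0, hp1⟩ := hp
    have hq0 : (0:ℝ) < p/2 := by linarith
    have hqp : p/2 < p := by linarith
    have hIq : IntervalIntegrable Q volume 0 (p/2) :=
      (hint p ⟨hp0, hp1⟩).mono_set (by
        rw [Set.uIcc_of_le hq0.le, Set.uIcc_of_le hp0.le]
        exact Icc_subset_Icc le_rfl hqp.le)
    have hIqp : IntervalIntegrable Q volume (p/2) p :=
      (hint p ⟨hp0, hp1⟩).mono_set (by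
        rw [Set.uIcc_of_le hqp.le, Set.uIcc_of_le hp0.le]
        exact Icc_subset_Icc hq0.le le_rfl)
    have hsplit : G p = (∫ x in (0:ℝ)..(p/2), Q x) + ∫ x in (p/2)..p, Q x := by
      rw [hG]
      exact (intervalIntegral.integral_add_adjacent_intervals hIq hIqp).symm
    have h1 : 0 ≤ ∫ x in (0:ℝ)..(p/2), Q x := by
      rw [intervalIntegral.integral_of_le hq0.le]
      apply setIntegral_nonneg measurableSet_Ioc
      intro x hx
      exact (hpos x ⟨hx.1, lt_trans (lt_of_le_of_lt hx.2 hqp) hp1⟩).le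
    have h2 : 0 < ∫ x in (p/2)..p, Q x := by
      apply intervalIntegral.intervalIntegral_pos_of_pos_on hIqp
      · intro x hx
        exact hpos x ⟨lt_trans hq0 hx.1, lt_trans hx.2 hp1⟩
      · exact hqp
    rw [hsplit]; linarith
  have hGposIcc : ∀ p ∈ Icc u 1, 0 < G p := by
    intro p hp
    rcases eq_or_lt_of_le hp.2 with h | h
    · have : G p = 1 := by rw [h]; exact hnorm
      rw [this]; norm_num
    · exact hGpos p ⟨lt_of_lt_of_le hu0 hp.1, h⟩
  -- key relation: p - A₁ p = G p / Q p on (0,1)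
  have hkey : ∀ p ∈ Ioo (0:ℝ) 1, p - A₁ p = G p / Q p := by
    intro p hp
    have hQp := hpos p hp
    rw [hA₁ p hp]
    field_simp
    simp only [hG]; ring
  -- derivative of log ∘ G
  have hderiv : ∀ p ∈ Ioo u 1, HasDerivAt (fun x => Real.log (G x)) ((p - A₁ p)⁻¹) p := by
    intro p hp
    have hp' : p ∈ Ioo (0:ℝ) 1 := ⟨lt_trans hu0 hp.1, hp.2⟩
    have hQp := hpos p hp'
    have hGp := hGpos p hp'
    have hDG : HasDerivAt G (Q p) p := by
      apply intervalIntegral.integral_hasDerivAt_right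
        (hint p hp')
        (hcont.stronglyMeasurableAtFilter isOpen_Ioo p hp')
        (hcont.continuousAt (isOpen_Ioo.mem_nhds hp'))
    have := hDG.log hGp.ne'
    have heq : (p - A₁ p)⁻¹ = Q p / G p := by
      rw [hkey p hp', inv_div]
    rw [heq]
    exact this
  -- FTC
  have hFTC : (∫ p in u..1, (p - A₁ p)⁻¹)
      = Real.log (G 1) - Real.log (G u) := by
    apply intervalIntegral.integral_eq_sub_of_hasDeriv_right_of_le
      (f := fun x => Real.log (G x)) (f' := fun p => (p - A₁ p)⁻¹) hu1.le
    · apply ContinuousOn.log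
      · exact hGcont.mono (Icc_subset_Icc hu0.le le_rfl)
      · intro p hp; exact (hGposIcc p hp).ne'
    · intro p hp
      exact (hderiv p hp).hasDerivWithinAt
    · exact hconv u ⟨hu0, hu1⟩
  have hG1 : G 1 = 1 := hnorm
  have hGu : 0 < G u := hGpos u ⟨hu0, hu1⟩
  have hQu := hpos u ⟨hu0, hu1⟩
  rw [hFTC, hG1, Real.log_one, zero_sub, neg_neg, Real.exp_log hGu,
    hkey u ⟨hu0, hu1⟩]
  field_simp
end

section
/- Let A₁(u) = u²/β for 0 ≤ u ≤ 1 with β > 1. Then the quantile function determined by A₁ through the inversion formula Q(u) = exp(-∫ᵤ¹ (p - A₁(p))⁻¹ dp)/(u - A₁(u)) is Q(u) = β(β-1)/(β-u)², and the corresponding distribution function is F(x) = β - (β(β-1)/x)^{1/2} on [(β-1)/β, β/(β-1)]. -/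
open MeasureTheory Set

/-- for A₁(u) = u²/β with β > 1, the inversion formula yields
Q(u) = β(β-1)/(β-u)², whose distribution function is F(x) = β - √(β(β-1)/x). -/
theorem pgr_quadratic_example
    (β : ℝ) (hβ : 1 < β)
    (A₁ Q F : ℝ → ℝ)
    (hA₁ : ∀ u ∈ Icc (0:ℝ) 1, A₁ u = u ^ 2 / β)
    (hQ : ∀ u ∈ Ioo (0:ℝ) 1,
      Q u = Real.exp (-∫ p in u..1, (p - A₁ p)⁻¹) / (u - A₁ u))
    (hF : ∀ x ∈ Icc ((β - 1) / β) (β / (β - 1)),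
      F x = β - Real.sqrt (β * (β - 1) / x)) :
    ∀ u ∈ Ioo (0:ℝ) 1,
      Q u = β * (β - 1) / (β - u) ^ 2 ∧
      Q u ∈ Icc ((β - 1) / β) (β / (β - 1)) ∧
      F (Q u) = u := by
  intro u hu
  obtain ⟨hu0, hu1⟩ := hu
  have hβ0 : (0:ℝ) < β := by linarith
  have hβ1 : (0:ℝ) < β - 1 := by linarith
  have huIcc : u ≤ 1 := le_of_lt hu1
  have huicc : Set.uIcc u 1 = Set.Icc u 1 := Set.uIcc_of_le huIcc
  -- step 1: rewrite integrand on the interval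
  have hcong : (∫ p in u..1, (p - A₁ p)⁻¹) = ∫ p in u..1, (p⁻¹ + (β - p)⁻¹) := by
    apply intervalIntegral.integral_congr
    intro p hp
    rw [huicc] at hp
    obtain ⟨hp1, hp2⟩ := hp
    have hp0 : 0 < p := lt_of_lt_of_le hu0 hp1
    have hpβ : 0 < β - p := by linarith
    show (p - A₁ p)⁻¹ = p⁻¹ + (β - p)⁻¹
    have hd : p - A₁ p = p * (β - p) / β := by
      rw [hA₁ p ⟨le_of_lt hp0, hp2⟩]; field_simp
    rw [hd, inv_div, inv_add_inv (ne_of_gt hp0) (ne_of_gt hpβ)]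
    congr 1
    ring
  -- step 2: compute the integral via FTC
  have hderiv : ∀ p ∈ Set.uIcc u 1,
      HasDerivAt (fun p => Real.log p - Real.log (β - p)) (p⁻¹ + (β - p)⁻¹) p := by
    intro p hp
    rw [huicc] at hp
    have hp0 : 0 < p := lt_of_lt_of_le hu0 hp.1
    have hpβ : 0 < β - p := by linarith [hp.2]
    have h1 : HasDerivAt Real.log p⁻¹ p := Real.hasDerivAt_log (ne_of_gt hp0)
    have h2 : HasDerivAt (fun p : ℝ => β - p) (-1) p := by
      simpa using (hasDerivAt_id p).const_sub β
    have h3 : HasDerivAt (fun p => Real.log (β - p)) ((β - p)⁻¹ * (-1)) p :=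
      (Real.hasDerivAt_log (ne_of_gt hpβ)).comp p h2
    have := h1.sub h3
    exact this.congr_deriv (by ring)
  have hcont : IntervalIntegrable (fun p => p⁻¹ + (β - p)⁻¹) volume u 1 := by
    apply ContinuousOn.intervalIntegrable
    rw [huicc]
    apply ContinuousOn.add
    · exact ContinuousOn.inv₀ continuousOn_id (fun p hp => ne_of_gt (lt_of_lt_of_le hu0 hp.1))
    · exact ContinuousOn.inv₀ (continuousOn_const.sub continuousOn_id)
        (fun p hp => ne_of_gt (by linarith [hp.2] : (0:ℝ) < β - p))
  have hint : (∫ p in u..1, (p⁻¹ + (β - p)⁻¹)) =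
      (Real.log 1 - Real.log (β - 1)) - (Real.log u - Real.log (β - u)) :=
    intervalIntegral.integral_eq_sub_of_hasDerivAt hderiv hcont
  have hβu : 0 < β - u := by linarith
  -- step 3: simplify Q u
  have hexp : Real.exp (-∫ p in u..1, (p - A₁ p)⁻¹) = (β - 1) * u / (β - u) := by
    rw [hcong, hint, Real.log_one]
    have : -((0 - Real.log (β - 1)) - (Real.log u - Real.log (β - u))) =
        Real.log (β - 1) + Real.log u - Real.log (β - u) := by ring
    rw [this, Real.exp_sub, Real.exp_add, Real.exp_log hβ1, Real.exp_log hu0,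
      Real.exp_log hβu]
  have hQu : Q u = β * (β - 1) / (β - u) ^ 2 := by
    rw [hQ u ⟨hu0, hu1⟩, hexp, hA₁ u ⟨le_of_lt hu0, huIcc⟩]
    have h1 : u - u ^ 2 / β = u * (β - u) / β := by field_simp
    rw [h1]
    field_simp
  have hQpos : (β - 1) / β ≤ Q u ∧ Q u ≤ β / (β - 1) := by
    rw [hQu]
    constructor
    · rw [div_le_div_iff₀ hβ0 (by positivity)]
      nlinarith [mul_pos (mul_pos hβ1 hu0) (show (0:ℝ) < 2 * β - u by linarith)]
    · rw [div_le_div_iff₀ (by positivity) hβ1]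
      nlinarith [mul_pos hβ0 (mul_pos (show (0:ℝ) < (β - u) - (β - 1) by linarith)
        (show (0:ℝ) < (β - u) + (β - 1) by linarith))]
  refine ⟨hQu, hQpos, ?_⟩
  rw [hF (Q u) hQpos, hQu]
  have hx : β * (β - 1) / (β * (β - 1) / (β - u) ^ 2) = (β - u) ^ 2 := by
    rw [div_div_eq_mul_div, mul_comm, mul_div_assoc, div_self (by positivity), mul_one]
  rw [hx, Real.sqrt_sq (le_of_lt hβu)]
  ring
end

section
/- If q(u) = k·u^α(1-u)^β with k > 0 and α, β > -2, then the poverty gap ratio is A₁(u) = B_u(α+2, β+1)/B_u(α+1, β+1), where B_u(a,b) = ∫₀ᵘ p^{a-1}(1-p)^{b-1} dp is the incomplete beta function. -/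
open MeasureTheory Set

/-- for q(u) = k u^α (1-u)^β, A₁(u) = B_u(α+2,β+1)/B_u(α+1,β+1). -/
theorem pgr_beta_quantile_density
    (k α β : ℝ) (hk : 0 < k) (hα : -2 < α) (hβ : -2 < β)
    (q Q A₁ : ℝ → ℝ)
    (hq : ∀ u ∈ Ioo (0:ℝ) 1, q u = k * u ^ α * (1 - u) ^ β)
    (hQ : ∀ u ∈ Ioo (0:ℝ) 1, Q u = ∫ p in (0:ℝ)..u, q p)
    (hA₁ : ∀ u ∈ Ioo (0:ℝ) 1,
      A₁ u = (1 / Q u) * ∫ p in (0:ℝ)..u, p * q p)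
    (B : ℝ → ℝ → ℝ → ℝ)
    (hB : ∀ u ∈ Ioo (0:ℝ) 1, ∀ a b : ℝ,
      B u a b = ∫ p in (0:ℝ)..u, p ^ (a - 1) * (1 - p) ^ (b - 1)) :
    ∀ u ∈ Ioo (0:ℝ) 1,
      A₁ u = B u (α + 2) (β + 1) / B u (α + 1) (β + 1) := by
  intro u hu
  have hmem : ∀ x ∈ Set.uIoc (0:ℝ) u, x ∈ Ioo (0:ℝ) 1 := by
    intro x hx
    rw [uIoc_of_le hu.1.le] at hx
    exact ⟨hx.1, lt_of_le_of_lt hx.2 hu.2⟩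
  have hQ' : Q u = k * B u (α + 1) (β + 1) := by
    rw [hQ u hu, hB u hu, ← intervalIntegral.integral_const_mul]
    apply intervalIntegral.integral_congr_ae
    filter_upwards with x hx
    have hx' := hmem x hx
    rw [hq x hx']
    ring_nf
  have hN : (∫ p in (0:ℝ)..u, p * q p) = k * B u (α + 2) (β + 1) := by
    rw [hB u hu, ← intervalIntegral.integral_const_mul]
    apply intervalIntegral.integral_congr_ae
    filter_upwards with x hx
    have hx' := hmem x hx
    rw [hq x hx']
    have : x ^ (α + 2 - 1) = x * x ^ α := by
      rw [show α + 2 - 1 = α + 1 by ring, Real.rpow_add hx'.1, Real.rpow_one]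
      ring
    rw [this]
    ring_nf
  rw [hA₁ u hu, hQ', hN, one_div_mul_eq_div, mul_div_mul_left _ _ hk.ne']
end

section
/- Let F be a continuous distribution function on [0,∞) with F(0)=0 and let A₁(t) = (1/t)∫₀ᵗ F(x) dx and A₂(t) = ∫₀ᵗ (1 - x/t)² dF(x). Then A₂(t) = (2/t²) ∫₀ᵗ x·A₁(x) dx. -/
open MeasureTheory Set

/-- A₂(t) = (2/t²) ∫₀ᵗ x·A₁(x) dx. -/
theorem fgt2_from_pgr
    (F f A₁ A₂ : ℝ → ℝ)
    (hcont : Continuous F)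
    (hF0 : F 0 = 0)
    (hderiv : ∀ x, HasDerivAt F (f x) x)
    (hfint : ∀ t : ℝ, IntervalIntegrable f volume 0 t)
    (hA₁ : ∀ t > (0:ℝ), A₁ t = (1 / t) * ∫ x in (0:ℝ)..t, F x)
    (hA₂ : ∀ t > (0:ℝ), A₂ t = ∫ x in (0:ℝ)..t, (1 - x / t) ^ 2 * f x) :
    ∀ t > (0:ℝ), A₂ t = (2 / t ^ 2) * ∫ x in (0:ℝ)..t, x * A₁ x := by
  intro t ht
  have ht0 : t ≠ 0 := ne_of_gt ht
  set G : ℝ → ℝ := fun x => ∫ y in (0:ℝ)..x, F y with hGdef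
  have hFint : ∀ a b : ℝ, IntervalIntegrable F volume a b := fun a b =>
    hcont.intervalIntegrable a b
  have hGderiv : ∀ x, HasDerivAt G (F x) x := fun x =>
    intervalIntegral.integral_hasDerivAt_right (hFint 0 x)
      (hcont.stronglyMeasurableAtFilter _ _) hcont.continuousAt
  have hGcont : Continuous G :=
    continuous_iff_continuousAt.2 fun x => (hGderiv x).continuousAt
  -- step 1: integration by parts for A₂
  have hu : ∀ x ∈ uIcc (0:ℝ) t,
      HasDerivAt (fun x => (1 - x / t) ^ 2) (2 * (1 - x / t) ^ 1 * (-(1/t))) x := by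
    intro x _
    have h1 : HasDerivAt (fun x : ℝ => 1 - x / t) (-(1/t)) x := by
      simpa using ((hasDerivAt_id x).div_const t).const_sub 1
    simpa using h1.fun_pow 2
  have hu'int : IntervalIntegrable (fun x => 2 * (1 - x / t) ^ 1 * (-(1/t))) volume 0 t := by
    apply Continuous.intervalIntegrable; fun_prop
  have parts1 :
      (∫ x in (0:ℝ)..t, (1 - x / t) ^ 2 * f x)
        = (1 - t / t) ^ 2 * F t - (1 - 0 / t) ^ 2 * F 0
          - ∫ x in (0:ℝ)..t, (2 * (1 - x / t) ^ 1 * (-(1/t))) * F x :=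
    intervalIntegral.integral_mul_deriv_eq_deriv_mul hu
      (fun x _ => hderiv x) hu'int (hfint t)
  -- step 2: integration by parts for ∫ x * F x
  have parts2 :
      (∫ x in (0:ℝ)..t, x * F x)
        = t * G t - 0 * G 0 - ∫ x in (0:ℝ)..t, 1 * G x :=
    intervalIntegral.integral_mul_deriv_eq_deriv_mul
      (fun x _ => hasDerivAt_id x) (fun x _ => hGderiv x)
      (continuous_const.intervalIntegrable 0 t)
      (hFint 0 t)
  -- split the integrand of parts1
  have split :
      (∫ x in (0:ℝ)..t, (2 * (1 - x / t) ^ 1 * (-(1/t))) * F x)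
        = (-(2/t)) * (∫ x in (0:ℝ)..t, F x)
          + (2/t^2) * ∫ x in (0:ℝ)..t, x * F x := by
    have h1 : (∫ x in (0:ℝ)..t, (2 * (1 - x / t) ^ 1 * (-(1/t))) * F x)
        = ∫ x in (0:ℝ)..t, ((-(2/t)) * F x + (2/t^2) * (x * F x)) := by
      apply intervalIntegral.integral_congr
      intro x _
      field_simp
      ring
    rw [h1, intervalIntegral.integral_add, intervalIntegral.integral_const_mul,
      intervalIntegral.integral_const_mul]
    · exact (hcont.intervalIntegrable 0 t).const_mul _
    · exact (((continuous_id.mul hcont)).intervalIntegrable 0 t).const_mul _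
  -- ∫ x*A₁ = ∫ G
  have congr1 : (∫ x in (0:ℝ)..t, x * A₁ x) = ∫ x in (0:ℝ)..t, G x := by
    apply intervalIntegral.integral_congr_ae
    filter_upwards with x hx
    rw [uIoc_of_le (le_of_lt ht)] at hx
    have hx0 : 0 < x := hx.1
    rw [hA₁ x hx0]
    field_simp
    rfl
  have hGt : G t = ∫ x in (0:ℝ)..t, F x := rfl
  have honeG : (∫ x in (0:ℝ)..t, 1 * G x) = ∫ x in (0:ℝ)..t, G x := by
    simp
  rw [hA₂ t ht, parts1, split, congr1, div_self ht0, hF0, parts2, honeG, ← hGt]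
  field_simp
  ring
end

section
/- Let Q : (0,1) → (0,∞) be a continuously differentiable, strictly increasing quantile function with Q(u) = α u^{1/β} for some α, β > 0 if and only if the Watts measure W(u) = u log Q(u) - ∫₀ᵘ log Q(p) dp equals u/β for all u ∈ (0,1). -/
open MeasureTheory Set

open intervalIntegral Real Filter in
private lemma watts_forward
    (Q : ℝ → ℝ) (β : ℝ) (hβ : 0 < β)
    (hlogint : ∀ u ∈ Ioo (0:ℝ) 1,
      IntervalIntegrable (fun p => Real.log (Q p)) volume 0 u)
    (α : ℝ) (hα : 0 < α) (hQ : ∀ u ∈ Ioo (0:ℝ) 1, Q u = α * u ^ (1 / β))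
    (u : ℝ) (hu : u ∈ Ioo (0:ℝ) 1) :
    u * Real.log (Q u) - (∫ p in (0:ℝ)..u, Real.log (Q p)) = u / β := by
  obtain ⟨hu0, hu1⟩ := hu
  have hlogQ : ∀ p ∈ Ioo (0:ℝ) 1, Real.log (Q p) = Real.log α + (1/β) * Real.log p := by
    intro p hp
    rw [hQ p hp, Real.log_mul hα.ne' (Real.rpow_pos_of_pos hp.1 _).ne', Real.log_rpow hp.1]
  set f : ℝ → ℝ := fun p => p * Real.log α + (1/β) * (p * Real.log p - p) with hf
  have hderiv : ∀ p ∈ Ioo (0:ℝ) u, HasDerivAt f (Real.log (Q p)) p := by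
    intro p hp
    have hp1 : p ∈ Ioo (0:ℝ) 1 := ⟨hp.1, hp.2.trans hu1⟩
    have h1 : HasDerivAt (fun p : ℝ => p * Real.log p) (Real.log p + 1) p := by
      have := (hasDerivAt_id' p).fun_mul (Real.hasDerivAt_log hp.1.ne')
      simpa [mul_inv_cancel₀ hp.1.ne'] using this
    have h2 : HasDerivAt f (1 * Real.log α + (1/β) * (Real.log p + 1 - 1)) p :=
      ((hasDerivAt_id p).mul_const (Real.log α)).add
        (((h1.sub (hasDerivAt_id p))).const_mul (1/β))
    rw [hlogQ p hp1]
    convert h2 using 1; ring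
  have htend0 : Tendsto f (nhdsWithin 0 (Ioi 0)) (nhds 0) := by
    have h1 : Tendsto (fun p : ℝ => p * Real.log p) (nhdsWithin 0 (Ioi 0)) (nhds 0) := by
      have := tendsto_log_mul_rpow_nhdsGT_zero (r := 1) one_pos
      simpa [mul_comm] using this
    have h2 : Tendsto (fun p : ℝ => p) (nhdsWithin 0 (Ioi 0)) (nhds 0) :=
      tendsto_id.mono_left nhdsWithin_le_nhds
    have h3 := ((h2.mul_const (Real.log α)).add ((h1.sub h2).const_mul (1/β)))
    rw [hf]
    simpa using h3
  have htendu : Tendsto f (nhdsWithin u (Iio u)) (nhds (f u)) := by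
    have hlog : ContinuousAt Real.log u := Real.continuousAt_log hu0.ne'
    have hc : ContinuousAt f u := by
      rw [hf]
      exact (continuousAt_id.mul continuousAt_const).add
        (continuousAt_const.mul ((continuousAt_id.mul hlog).sub continuousAt_id))
    exact hc.tendsto.mono_left nhdsWithin_le_nhds
  have hint := hlogint u ⟨hu0, hu1⟩
  have key : (∫ p in (0:ℝ)..u, Real.log (Q p)) = f u - 0 :=
    intervalIntegral.integral_eq_sub_of_hasDerivAt_of_tendsto hu0 hderiv hint htend0 htendu
  rw [key, hlogQ u ⟨hu0, hu1⟩, hf]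
  field_simp
  ring

/-- the Watts measure is W(u) = u/β iff Q is the power quantile
function Q(u) = α u^{1/β}. -/
theorem watts_characterizes_power
    (Q W : ℝ → ℝ) (β : ℝ) (hβ : 0 < β)
    (hpos : ∀ u ∈ Ioo (0:ℝ) 1, 0 < Q u)
    (hdiff : ∀ u ∈ Ioo (0:ℝ) 1, DifferentiableAt ℝ Q u)
    (hcontderiv : ContinuousOn (deriv Q) (Ioo (0:ℝ) 1))
    (hmono : StrictMonoOn Q (Ioo (0:ℝ) 1))
    (hlogint : ∀ u ∈ Ioo (0:ℝ) 1,
      IntervalIntegrable (fun p => Real.log (Q p)) volume 0 u)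
    (hW : ∀ u ∈ Ioo (0:ℝ) 1,
      W u = u * Real.log (Q u) - ∫ p in (0:ℝ)..u, Real.log (Q p)) :
    (∃ α > (0:ℝ), ∀ u ∈ Ioo (0:ℝ) 1, Q u = α * u ^ (1 / β)) ↔
      (∀ u ∈ Ioo (0:ℝ) 1, W u = u / β) := by
  constructor
  · rintro ⟨α, hα, hQ⟩ u hu
    rw [hW u hu]
    exact watts_forward Q β hβ hlogint α hα hQ u hu
  · intro h
    -- log ∘ Q is continuous on Ioo 0 1
    have hlogQcont : ∀ u ∈ Ioo (0:ℝ) 1, ContinuousAt (fun p => Real.log (Q p)) u := by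
      intro u hu
      exact (Real.continuousAt_log (hpos u hu).ne').comp (hdiff u hu).continuousAt
    -- FTC-1: the integral has derivative log (Q u) at u
    have hFderiv : ∀ u ∈ Ioo (0:ℝ) 1,
        HasDerivAt (fun v => ∫ p in (0:ℝ)..v, Real.log (Q p)) (Real.log (Q u)) u := by
      intro u hu
      refine intervalIntegral.integral_hasDerivAt_right (hlogint u hu) ?_ (hlogQcont u hu)
      exact ContinuousOn.stronglyMeasurableAtFilter isOpen_Ioo
        (continuousOn_of_forall_continuousAt hlogQcont) u hu
    -- key ODE: u * Q'(u) / Q(u) = 1/β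
    have hkey : ∀ u ∈ Ioo (0:ℝ) 1, u * deriv Q u / Q u = 1/β := by
      intro u hu
      have hQu := hpos u hu
      have hL : HasDerivAt (fun v => v * Real.log (Q v))
          (Real.log (Q u) + u * (deriv Q u / Q u)) u := by
        have h1 : HasDerivAt (fun v => Real.log (Q v)) (deriv Q u / Q u) u := by
          have := (Real.hasDerivAt_log hQu.ne').comp u (hdiff u hu).hasDerivAt
          simpa [div_eq_inv_mul, Function.comp_def] using this
        simpa [mul_comm] using (hasDerivAt_id' u).fun_mul h1
      have hR : HasDerivAt (fun v => v / β + ∫ p in (0:ℝ)..v, Real.log (Q p))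
          (1/β + Real.log (Q u)) u := by
        exact ((hasDerivAt_id u).div_const β).add (hFderiv u hu)
      have heq : (fun v => v * Real.log (Q v)) =ᶠ[nhds u]
          (fun v => v / β + ∫ p in (0:ℝ)..v, Real.log (Q p)) := by
        filter_upwards [isOpen_Ioo.mem_nhds hu] with v hv
        have := hW v hv
        have h2 := h v hv
        rw [h2] at this
        linarith [this]
      have := (hL.congr_of_eventuallyEq heq.symm).unique hR
      have : u * (deriv Q u / Q u) = 1/β := by linarith
      rw [← this]; ring
    -- K(u) = log Q(u) - (1/β) log u is constant
    set K : ℝ → ℝ := fun v => Real.log (Q v) - (1/β) * Real.log v with hK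
    have hKderiv : ∀ u ∈ Ioo (0:ℝ) 1, HasDerivAt K 0 u := by
      intro u hu
      have hQu := hpos u hu
      have h1 : HasDerivAt (fun v => Real.log (Q v)) (deriv Q u / Q u) u := by
        have := (Real.hasDerivAt_log hQu.ne').comp u (hdiff u hu).hasDerivAt
        simpa [div_eq_inv_mul, Function.comp_def] using this
      have h2 : HasDerivAt (fun v => (1/β) * Real.log v) ((1/β) * u⁻¹) u :=
        (Real.hasDerivAt_log hu.1.ne').const_mul (1/β)
      have h3 := h1.sub h2
      have hz : deriv Q u / Q u - (1/β) * u⁻¹ = 0 := by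
        have := hkey u hu
        have hu0 : u ≠ 0 := hu.1.ne'
        field_simp at this ⊢
        nlinarith [this]
      rw [hz] at h3
      exact h3
    have hKconst : ∀ u ∈ Ioo (0:ℝ) 1, K u = K (1/2) := by
      have half : (1/2 : ℝ) ∈ Ioo (0:ℝ) 1 := by norm_num
      have pair : ∀ x ∈ Ioo (0:ℝ) 1, ∀ y ∈ Ioo (0:ℝ) 1, x < y → K x = K y := by
        intro x hx y hy hxy
        obtain ⟨c, hc, hc'⟩ := exists_hasDerivAt_eq_slope K (fun _ => (0:ℝ)) hxy
          (fun z hz => (hKderiv z ⟨lt_of_lt_of_le hx.1 hz.1, lt_of_le_of_lt hz.2 hy.2⟩).continuousAt.continuousWithinAt)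
          (fun z hz => hKderiv z ⟨hx.1.trans hz.1, hz.2.trans hy.2⟩)
        have hyx : y - x ≠ 0 := sub_ne_zero.mpr hxy.ne'
        have h0 : (K y - K x)/(y - x) = 0 := hc'.symm
        have := (div_eq_iff hyx).mp h0
        linarith
      intro u hu
      rcases lt_trichotomy u (1/2) with hlt | heq | hgt
      · exact pair u hu (1/2) half hlt
      · rw [heq]
      · exact (pair (1/2) half u hu hgt).symm
    refine ⟨Real.exp (K (1/2)), Real.exp_pos _, ?_⟩
    intro u hu
    have hc := hKconst u hu
    have hQu := hpos u hu
    have : Real.log (Q u) = K (1/2) + (1/β) * Real.log u := by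
      rw [← hc]; simp only [hK]; ring
    have hexp := congrArg Real.exp this
    rw [Real.exp_log hQu, Real.exp_add] at hexp
    rw [hexp, Real.rpow_def_of_pos hu.1]
    ring_nf
end

section
/- Let Q be a positive continuous quantile function on (0,1). The Gini index of the poor G_Q(u) = 1 - (2/(u∫₀ᵘ Q(p)dp))∫₀ᵘ (u-p)Q(p) dp is constant in u if and only if Q(u) = α u^{1/β} for some constants α > 0, β > 0 (power distribution), in which case G_Q(u) = 1/(1+2β). -/
open MeasureTheory Set

/-- the Gini index of the poor is constant in u iff Q is a power
quantile function, in which case G_Q(u) = 1/(1+2β). -/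
theorem gini_poor_constant_iff_power
    (Q GQ : ℝ → ℝ)
    (hpos : ∀ u ∈ Ioo (0:ℝ) 1, 0 < Q u)
    (hdiff : ∀ u ∈ Ioo (0:ℝ) 1, DifferentiableAt ℝ Q u)
    (hcontderiv : ContinuousOn (deriv Q) (Ioo (0:ℝ) 1))
    (hmono : StrictMonoOn Q (Ioo (0:ℝ) 1))
    (hint : ∀ u ∈ Ioo (0:ℝ) 1, IntervalIntegrable Q volume 0 u)
    (hG : ∀ u ∈ Ioo (0:ℝ) 1,
      GQ u = 1 - (2 / (u * ∫ p in (0:ℝ)..u, Q p)) *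
        ∫ p in (0:ℝ)..u, (u - p) * Q p) :
    (∃ c : ℝ, ∀ u ∈ Ioo (0:ℝ) 1, GQ u = c) ↔
      (∃ α > (0:ℝ), ∃ β > (0:ℝ),
        (∀ u ∈ Ioo (0:ℝ) 1, Q u = α * u ^ (1 / β)) ∧
        (∀ u ∈ Ioo (0:ℝ) 1, GQ u = 1 / (1 + 2 * β))) := by
  constructor
  · rintro ⟨c, hc⟩
    have hopen : IsOpen (Ioo (0:ℝ) 1) := isOpen_Ioo
    have hcontQ : ContinuousOn Q (Ioo (0:ℝ) 1) := fun u hu =>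
      (hdiff u hu).continuousAt.continuousWithinAt
    set F : ℝ → ℝ := fun u => ∫ p in (0:ℝ)..u, Q p with hFdef
    set J : ℝ → ℝ := fun u => ∫ p in (0:ℝ)..u, p * Q p with hJdef
    have hintJ : ∀ u ∈ Ioo (0:ℝ) 1, IntervalIntegrable (fun p => p * Q p) volume 0 u :=
      fun u hu => (hint u hu).continuousOn_mul continuous_id.continuousOn
    have hFpos : ∀ u ∈ Ioo (0:ℝ) 1, 0 < F u := fun u hu =>
      intervalIntegral.intervalIntegral_pos_of_pos_on (hint u hu)
        (fun x hx => hpos x ⟨hx.1, hx.2.trans hu.2⟩) hu.1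
    have hFd : ∀ u ∈ Ioo (0:ℝ) 1, HasDerivAt F (Q u) u := fun u hu =>
      intervalIntegral.integral_hasDerivAt_right (hint u hu)
        (hcontQ.stronglyMeasurableAtFilter hopen u hu)
        (hdiff u hu).continuousAt
    have hJd : ∀ u ∈ Ioo (0:ℝ) 1, HasDerivAt J (u * Q u) u := fun u hu =>
      intervalIntegral.integral_hasDerivAt_right (hintJ u hu)
        ((continuous_id.continuousOn.mul hcontQ).stronglyMeasurableAtFilter hopen u hu)
        (continuousAt_id.mul (hdiff u hu).continuousAt)
    have h12 : (1/2:ℝ) ∈ Ioo (0:ℝ) 1 := by norm_num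
    -- step 1: 2*(u*F u - J u) = (1-c) * (u*F u)
    have key : ∀ u ∈ Ioo (0:ℝ) 1, 2 * (u * F u - J u) = (1 - c) * (u * F u) := by
      intro u hu
      have h1 : (∫ p in (0:ℝ)..u, (u - p) * Q p) = u * F u - J u := by
        have e : ∀ p ∈ uIcc (0:ℝ) u, (u - p) * Q p = u * Q p - p * Q p := fun p _ => by ring
        rw [intervalIntegral.integral_congr e,
            intervalIntegral.integral_sub ((hint u hu).const_mul u) (hintJ u hu),
            intervalIntegral.integral_const_mul]
      have h2 := (hc u hu).symm.trans (hG u hu)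
      rw [h1] at h2
      change c = 1 - 2 / (u * F u) * (u * F u - J u) at h2
      have hne : u * F u ≠ 0 := (mul_pos hu.1 (hFpos u hu)).ne'
      field_simp at h2
      rw [h2, sub_sub_cancel, div_mul_cancel₀ _ hne]
    -- step 2: differentiate → (1+c) * F u = (1-c) * (u * Q u)
    have key2 : ∀ u ∈ Ioo (0:ℝ) 1, (1 + c) * F u = (1 - c) * (u * Q u) := by
      intro u hu
      have hd1 : HasDerivAt (fun v => 2 * (v * F v - J v) - (1 - c) * (v * F v))
          (2 * ((1 * F u + u * Q u) - u * Q u) - (1 - c) * (1 * F u + u * Q u)) u := by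
        exact ((((hasDerivAt_id u).mul (hFd u hu)).sub (hJd u hu)).const_mul 2).sub
          (((hasDerivAt_id u).mul (hFd u hu)).const_mul (1 - c))
      have hd0 : HasDerivAt (fun v => 2 * (v * F v - J v) - (1 - c) * (v * F v)) 0 u := by
        have hev : (fun v => 2 * (v * F v - J v) - (1 - c) * (v * F v)) =ᶠ[nhds u]
            (fun _ => (0:ℝ)) := by
          filter_upwards [hopen.mem_nhds hu] with v hv
          have := key v hv; linarith
        exact (hasDerivAt_const u (0:ℝ)).congr_of_eventuallyEq hev
      have := hd1.unique hd0
      nlinarith [this]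
    have hcm1 : -1 < c := by
      have hA := hFpos _ h12; have hB := hpos _ h12; have hk := key2 _ h12
      nlinarith
    have hc1 : c < 1 := by
      have hA := hFpos _ h12; have hB := hpos _ h12; have hk := key2 _ h12
      nlinarith
    set γ : ℝ := 2 * c / (1 - c) with hγdef
    -- step 3: differentiate again → u * Q' u = γ * Q u
    have key3 : ∀ u ∈ Ioo (0:ℝ) 1, u * deriv Q u = γ * Q u := by
      intro u hu
      have hd1 : HasDerivAt (fun v => (1 + c) * F v - (1 - c) * (v * Q v))
          ((1 + c) * Q u - (1 - c) * (1 * Q u + u * deriv Q u)) u := by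
        exact ((hFd u hu).const_mul (1 + c)).sub
          (((hasDerivAt_id u).mul (hdiff u hu).hasDerivAt).const_mul (1 - c))
      have hd0 : HasDerivAt (fun v => (1 + c) * F v - (1 - c) * (v * Q v)) 0 u := by
        have hev : (fun v => (1 + c) * F v - (1 - c) * (v * Q v)) =ᶠ[nhds u]
            (fun _ => (0:ℝ)) := by
          filter_upwards [hopen.mem_nhds hu] with v hv
          have := key2 v hv; linarith
        exact (hasDerivAt_const u (0:ℝ)).congr_of_eventuallyEq hev
      have h0 := hd1.unique hd0
      rw [hγdef]
      have h1c : (1:ℝ) - c ≠ 0 := by linarith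
      field_simp
      nlinarith [h0]
    -- step 4: g = Q u * u^(-γ) has zero derivative
    set g : ℝ → ℝ := fun u => Q u * u ^ (-γ) with hgdef
    have hgd : ∀ u ∈ Ioo (0:ℝ) 1, HasDerivAt g 0 u := by
      intro u hu
      have hr : HasDerivAt (fun x : ℝ => x ^ (-γ)) (-γ * u ^ (-γ - 1)) u :=
        Real.hasDerivAt_rpow_const (Or.inl hu.1.ne')
      have h := (hdiff u hu).hasDerivAt.mul hr
      refine h.congr_deriv ?_
      have h1 : u ^ (-γ) = u ^ (-γ - 1) * u := by
        rw [← Real.rpow_add_one hu.1.ne' (-γ - 1)]; ring_nf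
      rw [h1]
      have h2 : deriv Q u * (u ^ (-γ - 1) * u) + Q u * (-γ * u ^ (-γ - 1))
          = (u * deriv Q u - γ * Q u) * u ^ (-γ - 1) := by ring
      rw [h2, key3 u hu, sub_self, zero_mul]
    -- step 5: g is constant
    have hconst : ∀ u ∈ Ioo (0:ℝ) 1, g u = g (1/2) := by
      intro u hu
      refine (convex_Ioo (0:ℝ) 1).is_const_of_fderivWithin_eq_zero
        (fun v hv => ((hgd v hv).differentiableAt).differentiableWithinAt) ?_ hu h12
      intro v hv
      rw [fderivWithin_of_isOpen hopen hv, (hgd v hv).hasFDerivAt.fderiv]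
      ext; simp
    set α : ℝ := Q (1/2) * (1/2:ℝ) ^ (-γ) with hαdef
    have hαpos : 0 < α := mul_pos (hpos _ h12) (Real.rpow_pos_of_pos (by norm_num) _)
    have hQeq : ∀ u ∈ Ioo (0:ℝ) 1, Q u = α * u ^ γ := by
      intro u hu
      have h := hconst u hu
      rw [hgdef] at h
      simp only at h
      rw [Real.rpow_neg hu.1.le] at h
      have hne : u ^ γ ≠ 0 := (Real.rpow_pos_of_pos hu.1 _).ne'
      field_simp at h
      rw [hαdef]
      linear_combination h
    have hγpos : 0 < γ := by
      by_contra h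
      push_neg at h
      have h14 : (1/4:ℝ) ∈ Ioo (0:ℝ) 1 := by norm_num
      have hlt := hmono h14 h12 (by norm_num)
      rw [hQeq _ h14, hQeq _ h12] at hlt
      have hle : (1/2:ℝ) ^ γ ≤ (1/4:ℝ) ^ γ :=
        Real.rpow_le_rpow_of_nonpos (by norm_num) (by norm_num) h
      nlinarith
    have hcpos : 0 < c := by
      rcases lt_trichotomy c 0 with h | h | h
      · exfalso
        have : γ < 0 := div_neg_of_neg_of_pos (by linarith) (by linarith)
        linarith
      · exfalso; rw [hγdef, h] at hγpos; norm_num at hγpos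
      · exact h
    refine ⟨α, hαpos, 1/γ, by positivity, fun u hu => ?_, fun u hu => ?_⟩
    · rw [hQeq u hu, one_div_one_div]
    · rw [hc u hu]
      rw [show (1:ℝ) / (1 + 2 * (1/γ)) = c by
        rw [hγdef]; field_simp; ring]
  · rintro ⟨α, hα, β, hβ, hQ, hGQ⟩
    exact ⟨1 / (1 + 2 * β), hGQ⟩
end
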